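/- Fix a time horizon T ≥ 1 and a finite alphabet O with |O| = m+1. For every function s : O^T → ℝ there exist a constant c ∈ ℝ and functions U_t : O^t → ℝ^m for t = 0,1,...,T-1 (where O^0 is a point) such that s(z_1,...,z_T) = c - ∑_{t=1}^{T} ⟨U_{t-1}(z_1,...,z_{t-1}), e(z_t)⟩ for all (z_1,...,z_T) ∈ O^T, where e is the balanced encoding of O into ℝ^m. Moreover c and the functions U_t are unique. -/

import Mathlib

open Finset

def stdBasis (m : ℕ) (i : Fin m) : Fin m → ℝ := fun j => if j = i then 1 else 0

/-- The balanced encoding `e : {0,1,…,m} → ℝ^m`. -/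
def balancedEncoding (m : ℕ) (z : Fin (m + 1)) : Fin m → ℝ :=
  if h : (z : ℕ) = 0 then -∑ i : Fin m, stdBasis m i
  else stdBasis m ⟨(z : ℕ) - 1, by omega⟩

/- ------------------- auxiliary material ------------------- -/

def succEmb (m : ℕ) (i : Fin m) : Fin (m + 1) := ⟨(i : ℕ) + 1, by have := i.isLt; omega⟩

lemma ip (m : ℕ) (U : Fin m → ℝ) (z : Fin (m + 1)) :
    ∑ i : Fin m, U i * balancedEncoding m z i =
      if h : (z : ℕ) = 0 then -∑ i : Fin m, U i
      else U ⟨(z : ℕ) - 1, by have := z.isLt; omega⟩ := by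
  by_cases h : (z : ℕ) = 0
  · rw [dif_pos h]
    have hz : ∀ i : Fin m, balancedEncoding m z i = -1 := by
      intro i
      rw [balancedEncoding, dif_pos h]
      simp [stdBasis]
    simp only [hz, mul_neg, mul_one, Finset.sum_neg_distrib]
  · rw [dif_neg h]
    simp only [balancedEncoding, dif_neg h, stdBasis]
    simp [Finset.sum_ite_eq', mul_ite]

lemma ip_succ (m : ℕ) (U : Fin m → ℝ) (i : Fin m) :
    ∑ j : Fin m, U j * balancedEncoding m (succEmb m i) j = U i := by
  rw [ip, dif_neg (by simp [succEmb])]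
  exact congrArg U (Fin.ext (by simp [succEmb]))

lemma sum_enc (m : ℕ) (i : Fin m) : ∑ z : Fin (m + 1), balancedEncoding m z i = 0 := by
  rw [Fin.sum_univ_succ]
  have h0 : balancedEncoding m 0 i = -1 := by
    simp [balancedEncoding, stdBasis]
  have hs : ∀ k : Fin m, balancedEncoding m k.succ i = if i = k then 1 else 0 := by
    intro k
    have hk : ((k.succ : Fin (m + 1)) : ℕ) ≠ 0 := by simp
    rw [balancedEncoding, dif_neg hk]
    have : (⟨((k.succ : Fin (m+1)) : ℕ) - 1, by simp⟩ : Fin m) = k := by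
      apply Fin.ext; simp
    rw [this]
    rfl
  simp [h0, hs]

lemma ip_of_sum_zero (m : ℕ) (f : Fin (m + 1) → ℝ) (hf : ∑ z : Fin (m + 1), f z = 0)
    (z : Fin (m + 1)) :
    ∑ i : Fin m, f (succEmb m i) * balancedEncoding m z i = f z := by
  rw [ip]
  by_cases h : (z : ℕ) = 0
  · rw [dif_pos h]
    have hz : z = 0 := Fin.ext h
    rw [Fin.sum_univ_succ] at hf
    have hsk : ∀ k : Fin m, f k.succ = f (succEmb m k) := fun k => rfl
    simp only [hsk] at hf
    rw [hz]
    linarith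
  · rw [dif_neg h]
    exact congrArg f (Fin.ext (by simp [succEmb]; omega))

def snoc' {m T : ℕ} (y : Fin T → Fin (m + 1)) (zl : Fin (m + 1)) (j : Fin (T + 1)) :
    Fin (m + 1) :=
  if h : (j : ℕ) < T then y ⟨j, h⟩ else zl

noncomputable def sbar {m T : ℕ} (s : (Fin (T + 1) → Fin (m + 1)) → ℝ)
    (y : Fin T → Fin (m + 1)) : ℝ :=
  (∑ zl : Fin (m + 1), s (snoc' y zl)) / (m + 1)

lemma sbar_mul {m T : ℕ} (s : (Fin (T + 1) → Fin (m + 1)) → ℝ) (y : Fin T → Fin (m + 1)) :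
    ((m : ℝ) + 1) * sbar s y = ∑ zl : Fin (m + 1), s (snoc' y zl) := by
  have hm : ((m : ℝ) + 1) ≠ 0 := by positivity
  rw [sbar]
  field_simp

lemma snoc'_castSucc {m T : ℕ} (y : Fin T → Fin (m + 1)) (zl : Fin (m + 1)) (t' : Fin T) :
    snoc' y zl (Fin.castSucc t') = y t' := by
  have h : ((Fin.castSucc t' : Fin (T + 1)) : ℕ) < T := t'.isLt
  simp only [snoc', dif_pos h]
  rfl

lemma snoc'_last {m T : ℕ} (y : Fin T → Fin (m + 1)) (zl : Fin (m + 1)) :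
    snoc' y zl (Fin.last T) = zl := by
  have h : ¬ ((Fin.last T : Fin (T + 1)) : ℕ) < T := by simp
  simp only [snoc', dif_neg h]

lemma restrict_castSucc {m T : ℕ} (y : Fin T → Fin (m + 1)) (zl : Fin (m + 1)) (t' : Fin T) :
    (fun j : Fin (((Fin.castSucc t') : Fin (T + 1)) : ℕ) =>
        snoc' y zl (j.castLE (Fin.castSucc t').isLt.le)) =
      (fun j : Fin ((t' : ℕ)) => y (j.castLE t'.isLt.le)) := by
  funext j
  have h : ((j.castLE (Fin.castSucc t').isLt.le : Fin (T + 1)) : ℕ) < T := by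
    have h1 : (j : ℕ) < (t' : ℕ) := j.isLt
    have h2 := t'.isLt
    simp only [Fin.coe_castLE]
    omega
  simp only [snoc', dif_pos h]
  rfl

lemma restrict_last {m T : ℕ} (y : Fin T → Fin (m + 1)) (zl : Fin (m + 1)) :
    (fun j : Fin (((Fin.last T) : Fin (T + 1)) : ℕ) =>
        snoc' y zl (j.castLE (Fin.last T).isLt.le)) = y := by
  funext j
  have h : ((j.castLE (Fin.last T).isLt.le : Fin (T + 1)) : ℕ) < T := by
    have := j.isLt
    simp only [Fin.coe_castLE]
    exact this
  simp only [snoc', dif_pos h]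
  rfl

lemma snoc'_eta {m T : ℕ} (z : Fin (T + 1) → Fin (m + 1)) :
    snoc' (fun j : Fin T => z (Fin.castSucc j)) (z (Fin.last T)) = z := by
  funext j
  by_cases h : (j : ℕ) < T
  · simp only [snoc', dif_pos h]
    exact congrArg z (Fin.ext rfl)
  · simp only [snoc', dif_neg h]
    have hj : j = Fin.last T := Fin.ext (by have := j.isLt; simp only [Fin.val_last]; omega)
    rw [hj]

noncomputable def buildU {m T : ℕ} (s : (Fin (T + 1) → Fin (m + 1)) → ℝ)
    (V : (t : Fin T) → (Fin (t : ℕ) → Fin (m + 1)) → Fin m → ℝ)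
    (t : Fin (T + 1)) : (Fin (t : ℕ) → Fin (m + 1)) → Fin m → ℝ :=
  if h : (t : ℕ) < T then V ⟨(t : ℕ), h⟩
  else fun y i =>
    sbar s (fun j : Fin T => y ⟨(j : ℕ), by have := j.isLt; omega⟩) -
      s (snoc' (fun j : Fin T => y ⟨(j : ℕ), by have := j.isLt; omega⟩) (succEmb m i))

lemma buildU_castSucc {m T : ℕ} (s : (Fin (T + 1) → Fin (m + 1)) → ℝ)
    (V : (t : Fin T) → (Fin (t : ℕ) → Fin (m + 1)) → Fin m → ℝ) (t' : Fin T) :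
    buildU s V (Fin.castSucc t') = V t' := by
  have h : ((Fin.castSucc t' : Fin (T + 1)) : ℕ) < T := t'.isLt
  simp only [buildU, dif_pos h]
  rfl

lemma buildU_last {m T : ℕ} (s : (Fin (T + 1) → Fin (m + 1)) → ℝ)
    (V : (t : Fin T) → (Fin (t : ℕ) → Fin (m + 1)) → Fin m → ℝ)
    (y : Fin T → Fin (m + 1)) (i : Fin m) :
    buildU s V (Fin.last T) y i = sbar s y - s (snoc' y (succEmb m i)) := by
  have h : ¬ ((Fin.last T : Fin (T + 1)) : ℕ) < T := by simp
  simp only [buildU, dif_neg h]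
  rfl

theorem repAux (m : ℕ) : ∀ (T : ℕ) (s : (Fin T → Fin (m + 1)) → ℝ),
    ∃! p : ℝ × ((t : Fin T) → ((Fin (t : ℕ) → Fin (m + 1)) → Fin m → ℝ)),
      ∀ z : Fin T → Fin (m + 1),
        s z = p.1 - ∑ t : Fin T, ∑ i : Fin m,
          p.2 t (fun j : Fin (t : ℕ) => z (j.castLE t.isLt.le)) i *
            balancedEncoding m (z t) i := by
  intro T
  induction T with
  | zero =>
    intro s
    refine ⟨(s (fun j => j.elim0), fun t => t.elim0), fun z => ?_, ?_⟩
    · have hz : z = fun j => j.elim0 := funext fun j => j.elim0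
      subst hz
      simp
    · rintro ⟨c', U'⟩ h
      have h0 := h (fun j => j.elim0)
      simp only [Finset.univ_eq_empty, Finset.sum_empty, sub_zero] at h0
      rw [Prod.mk.injEq]
      exact ⟨h0.symm, funext fun t => t.elim0⟩
  | succ T IH =>
    intro s
    obtain ⟨⟨c, V⟩, hV, hVu⟩ := IH (sbar s)
    simp only at hV hVu
    -- splitting lemma for arbitrary U₀
    have split : ∀ (U₀ : (t : Fin (T + 1)) → (Fin (t : ℕ) → Fin (m + 1)) → Fin m → ℝ)
        (y : Fin T → Fin (m + 1)) (zl : Fin (m + 1)),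
        (∑ t : Fin (T + 1), ∑ i : Fin m,
            U₀ t (fun j : Fin (t : ℕ) => (snoc' y zl) (j.castLE t.isLt.le)) i *
              balancedEncoding m ((snoc' y zl) t) i)
        = (∑ t' : Fin T, ∑ i : Fin m,
            U₀ (Fin.castSucc t') (fun j : Fin ((t' : ℕ)) => y (j.castLE t'.isLt.le)) i *
              balancedEncoding m (y t') i)
          + ∑ i : Fin m, U₀ (Fin.last T) y i * balancedEncoding m zl i := by
      intro U₀ y zl
      rw [Fin.sum_univ_castSucc]
      congr 1
      · refine Finset.sum_congr rfl fun t' _ => ?_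
        rw [restrict_castSucc y zl t', snoc'_castSucc y zl t']
      · rw [restrict_last y zl, snoc'_last y zl]
    have hm : ((m : ℝ) + 1) ≠ 0 := by positivity
    -- existence
    have prop : ∀ z : Fin (T + 1) → Fin (m + 1),
        s z = c - ∑ t : Fin (T + 1), ∑ i : Fin m,
          buildU s V t (fun j : Fin (t : ℕ) => z (j.castLE t.isLt.le)) i *
            balancedEncoding m (z t) i := by
      have H : ∀ (y : Fin T → Fin (m + 1)) (zl : Fin (m + 1)),
          s (snoc' y zl) = c - ∑ t : Fin (T + 1), ∑ i : Fin m,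
            buildU s V t (fun j : Fin (t : ℕ) => (snoc' y zl) (j.castLE t.isLt.le)) i *
              balancedEncoding m ((snoc' y zl) t) i := by
        intro y zl
        rw [split (buildU s V) y zl]
        have h2 : ∑ i : Fin m, buildU s V (Fin.last T) y i * balancedEncoding m zl i
            = sbar s y - s (snoc' y zl) := by
          have hf : ∑ z0 : Fin (m + 1), (sbar s y - s (snoc' y z0)) = 0 := by
            rw [Finset.sum_sub_distrib, Finset.sum_const, ← sbar_mul s y]
            simp only [Finset.card_univ, Fintype.card_fin, nsmul_eq_mul]
            push_cast
            ring
          have hkey := ip_of_sum_zero m (fun z0 => sbar s y - s (snoc' y z0)) hf zl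
          refine Eq.trans ?_ hkey
          refine Finset.sum_congr rfl fun i _ => ?_
          rw [buildU_last]
        rw [h2]
        have h3 : ∑ t' : Fin T, ∑ i : Fin m,
            buildU s V (Fin.castSucc t') (fun j : Fin ((t' : ℕ)) => y (j.castLE t'.isLt.le)) i *
              balancedEncoding m (y t') i = c - sbar s y := by
          simp only [fun t' : Fin T => buildU_castSucc s V t']
          have h4 := hV y
          linarith
        rw [h3]
        ring
      intro z
      have hz := H (fun j : Fin T => z (Fin.castSucc j)) (z (Fin.last T))
      rwa [snoc'_eta z] at hz
    refine ⟨(c, buildU s V), prop, ?_⟩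
    rintro ⟨c', U'⟩ hU'
    have hrep : ∀ (y : Fin T → Fin (m + 1)) (zl : Fin (m + 1)),
        s (snoc' y zl) = c' - ((∑ t' : Fin T, ∑ i : Fin m,
            U' (Fin.castSucc t') (fun j : Fin ((t' : ℕ)) => y (j.castLE t'.isLt.le)) i *
              balancedEncoding m (y t') i)
          + ∑ i : Fin m, U' (Fin.last T) y i * balancedEncoding m zl i) := by
      intro y zl
      have := hU' (snoc' y zl)
      rwa [split U' y zl] at this
    have hVbar : ∀ y : Fin T → Fin (m + 1),
        sbar s y = c' - ∑ t' : Fin T, ∑ i : Fin m,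
          U' (Fin.castSucc t') (fun j : Fin ((t' : ℕ)) => y (j.castLE t'.isLt.le)) i *
            balancedEncoding m (y t') i := by
      intro y
      set S1 := ∑ t' : Fin T, ∑ i : Fin m,
        U' (Fin.castSucc t') (fun j : Fin ((t' : ℕ)) => y (j.castLE t'.isLt.le)) i *
          balancedEncoding m (y t') i with hS1
      have hzero : ∑ zl : Fin (m + 1), ∑ i : Fin m,
          U' (Fin.last T) y i * balancedEncoding m zl i = 0 := by
        rw [Finset.sum_comm]
        refine Finset.sum_eq_zero fun i _ => ?_
        rw [← Finset.mul_sum, sum_enc, mul_zero]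
      have hsum : ((m : ℝ) + 1) * sbar s y = ((m : ℝ) + 1) * (c' - S1) := by
        rw [sbar_mul s y]
        calc ∑ zl : Fin (m + 1), s (snoc' y zl)
            = ∑ zl : Fin (m + 1), (c' - (S1 + ∑ i : Fin m,
                U' (Fin.last T) y i * balancedEncoding m zl i)) := by
              refine Finset.sum_congr rfl fun zl _ => ?_
              rw [hrep y zl]
          _ = ∑ zl : Fin (m + 1), (c' - S1) - ∑ zl : Fin (m + 1), ∑ i : Fin m,
                U' (Fin.last T) y i * balancedEncoding m zl i := by
              rw [← Finset.sum_sub_distrib]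
              refine Finset.sum_congr rfl fun zl _ => ?_
              ring
          _ = ((m : ℝ) + 1) * (c' - S1) := by
              rw [hzero, sub_zero, Finset.sum_const, Finset.card_univ, Fintype.card_fin,
                nsmul_eq_mul]
              push_cast
              ring
      exact mul_left_cancel₀ hm hsum
    have key := hVu (c', fun t' : Fin T => U' (Fin.castSucc t')) hVbar
    have hc : c' = c := congrArg Prod.fst key
    have hVV : (fun t' : Fin T => U' (Fin.castSucc t'))
        = (fun t' : Fin T => V t') := congrArg Prod.snd key
    have hlast : ∀ (y : Fin T → Fin (m + 1)) (i : Fin m),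
        U' (Fin.last T) y i = buildU s V (Fin.last T) y i := by
      intro y i
      rw [buildU_last]
      have h5 := hrep y (succEmb m i)
      have h6 := ip_succ m (U' (Fin.last T) y) i
      rw [h6] at h5
      have h7 := hVbar y
      linarith
    rw [Prod.mk.injEq]
    refine ⟨hc, ?_⟩
    funext t
    induction t using Fin.lastCases with
    | last =>
      funext y i
      exact hlast y i
    | cast t' =>
      rw [buildU_castSucc]
      exact congrFun hVV t'

/-- every `s : O^T → ℝ` admits a unique causal representation
`s z = c - ∑_{t=1}^T ⟨U_{t-1}(z_1,…,z_{t-1}), e(z_t)⟩`, where each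
`U_{t-1}` depends only on the first `t-1` coordinates. -/
theorem exists_unique_causal_representation (m T : ℕ) (hT : 1 ≤ T)
    (s : (Fin T → Fin (m + 1)) → ℝ) :
    ∃! p : ℝ × ((t : Fin T) → ((Fin (t : ℕ) → Fin (m + 1)) → Fin m → ℝ)),
      ∀ z : Fin T → Fin (m + 1),
        s z = p.1 - ∑ t : Fin T, ∑ i : Fin m,
          p.2 t (fun j : Fin (t : ℕ) => z (j.castLE t.isLt.le)) i *
            balancedEncoding m (z t) i := by
  exact repAux m T s
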